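/- arXiv:1307.3063 — 2 statements merged into one kernel-verified Lean document; each statement's English description precedes it below -/
import Mathlib

section
/- Let f : S^n → ℝ be twice continuously differentiable on the unit sphere S^n ⊂ ℝ^{n+1}. Then there exists a convex function F : ℝ^{n+1} → ℝ such that F restricted to S^n equals f. -/
open Set Metric
set_option maxHeartbeats 2000000
set_option synthInstance.maxHeartbeats 400000

section Aux

variable {E : Type*} [NormedAddCommGroup E] [InnerProductSpace ℝ E] [FiniteDimensional ℝ E]

local notation "⟪" x ", " y "⟫" => @inner ℝ _ _ x y

theorem aux_convex_ext (f : E → ℝ) (U : Set E) (hU : IsOpen U)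
    (hUs : Metric.sphere (0:E) 1 ⊆ U) (hf : ContDiffOn ℝ 2 f U) :
    ∃ F : E → ℝ, ConvexOn ℝ Set.univ F ∧ ∀ x ∈ Metric.sphere (0:E) 1, F x = f x := by
  classical
  set V : Set E := {z : E | z ≠ 0} with hV
  have hVopen : IsOpen V := isOpen_compl_singleton
  set N : E → E := fun y => ‖y‖⁻¹ • y with hN
  have hNsphere : ∀ z : E, z ≠ 0 → N z ∈ Metric.sphere (0:E) 1 := by
    intro z hz
    have : ‖N z‖ = 1 := by
      rw [hN]; simp [norm_smul, abs_of_nonneg, inv_mul_cancel₀ (norm_ne_zero_iff.2 hz)]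
    simpa [mem_sphere_iff_norm] using this
  set G : E → ℝ := fun y => f (N y) with hG
  -- smoothness of G on V
  have hGc : ∀ z : E, z ≠ 0 → ContDiffAt ℝ 2 G z := by
    intro z hz
    have hNz : ContDiffAt ℝ 2 N z :=
      ((contDiffAt_norm ℝ hz).inv (norm_ne_zero_iff.2 hz)).smul contDiffAt_id
    have hfz : ContDiffAt ℝ 2 f (N z) :=
      hf.contDiffAt (hU.mem_nhds (hUs (hNsphere z hz)))
    exact hfz.comp z hNz
  have hGV : ContDiffOn ℝ 2 G V := fun z hz => (hGc z hz).contDiffWithinAt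
  -- homogeneity of G
  have hGhom : ∀ c : ℝ, 0 < c → ∀ z : E, z ≠ 0 → G (c • z) = G z := by
    intro c hc z hz
    have hz' : ‖z‖ ≠ 0 := norm_ne_zero_iff.2 hz
    have hNz : N (c • z) = N z := by
      simp only [hN, norm_smul, smul_smul, Real.norm_eq_abs, abs_of_pos hc]
      congr 1
      field_simp
    simp only [hG, hNz]
  set G' : E → (E →L[ℝ] ℝ) := fderiv ℝ G with hG'
  set G'' : E → (E →L[ℝ] (E →L[ℝ] ℝ)) := fderiv ℝ G' with hG''
  have hGd : ∀ z : E, z ≠ 0 → DifferentiableAt ℝ G z := fun z hz =>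
    (hGc z hz).differentiableAt (by norm_num)
  have hG'V : ContDiffOn ℝ 1 G' V := hGV.fderiv_of_isOpen hVopen (by norm_num)
  have hG'd : ∀ z : E, z ≠ 0 → DifferentiableAt ℝ G' z := by
    intro z hz
    exact ((hG'V z hz).differentiableWithinAt (by norm_num)).differentiableAt
      (hVopen.mem_nhds hz)
  -- derivative scaling identities
  have hsmul : ∀ (c : ℝ) (z : E), HasFDerivAt (fun y : E => c • y)
      (c • ContinuousLinearMap.id ℝ E) z := by
    intro c z
    exact (c • ContinuousLinearMap.id ℝ E).hasFDerivAt (x := z)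
  have hscale1 : ∀ c : ℝ, 0 < c → ∀ z : E, z ≠ 0 → G' z = c • G' (c • z) := by
    intro c hc z hz
    have hcz : c • z ≠ 0 := smul_ne_zero hc.ne' hz
    have heq : (fun y => G (c • y)) =ᶠ[nhds z] G := by
      filter_upwards [hVopen.mem_nhds hz] with y hy
      exact hGhom c hc y hy
    have hcomp : HasFDerivAt (fun y => G (c • y))
        ((G' (c • z)).comp (c • ContinuousLinearMap.id ℝ E)) z :=
      ((hGd _ hcz).hasFDerivAt).comp z (hsmul c z)
    have h2 : fderiv ℝ G z = (G' (c • z)).comp (c • ContinuousLinearMap.id ℝ E) :=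
      (hcomp.congr_of_eventuallyEq heq.symm).fderiv
    rw [hG', h2]
    ext w
    simp [hG', ContinuousLinearMap.comp_apply, map_smul, smul_eq_mul]
  have hscale2 : ∀ c : ℝ, 0 < c → ∀ z : E, z ≠ 0 → ‖G'' z‖ ≤ c * c * ‖G'' (c • z)‖ := by
    intro c hc z hz
    have hcz : c • z ≠ 0 := smul_ne_zero hc.ne' hz
    have heq : (fun y => c • G' (c • y)) =ᶠ[nhds z] G' := by
      filter_upwards [hVopen.mem_nhds hz] with y hy
      exact (hscale1 c hc y hy).symm
    have hcomp : HasFDerivAt (fun y => c • G' (c • y))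
        (c • ((G'' (c • z)).comp (c • ContinuousLinearMap.id ℝ E))) z :=
      (((hG'd _ hcz).hasFDerivAt).comp z (hsmul c z)).const_smul c
    have h2 : G'' z = c • ((G'' (c • z)).comp (c • ContinuousLinearMap.id ℝ E)) := by
      rw [hG'']
      exact (hcomp.congr_of_eventuallyEq heq.symm).fderiv
    have h3 : ‖(G'' (c • z)).comp (c • ContinuousLinearMap.id ℝ E)‖ ≤
        ‖G'' (c • z)‖ * (c * 1) := by
      refine (ContinuousLinearMap.opNorm_comp_le _ _).trans ?_
      refine mul_le_mul_of_nonneg_left ?_ (norm_nonneg _)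
      rw [norm_smul c (ContinuousLinearMap.id ℝ E), Real.norm_eq_abs, abs_of_pos hc]
      exact mul_le_mul_of_nonneg_left ContinuousLinearMap.norm_id_le hc.le
    calc ‖G'' z‖ = c * ‖(G'' (c • z)).comp (c • ContinuousLinearMap.id ℝ E)‖ := by
          rw [h2, @norm_smul ℝ _ _ _ _ (NormedSpace.toNormSMulClass) c
              ((G'' (c • z)).comp (c • ContinuousLinearMap.id ℝ E)),
            Real.norm_eq_abs, abs_of_pos hc]
      _ ≤ c * (‖G'' (c • z)‖ * (c * 1)) := mul_le_mul_of_nonneg_left h3 hc.le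
      _ = c * c * ‖G'' (c • z)‖ := by ring
  -- bounds on the sphere
  obtain ⟨M, hM0, hMb⟩ : ∃ M : ℝ, 0 ≤ M ∧ ∀ z ∈ Metric.sphere (0:E) 1, |f z| ≤ M := by
    obtain ⟨M, hMb⟩ := (isCompact_sphere (0:E) 1).exists_bound_of_continuousOn
      ((hf.continuousOn).mono hUs)
    exact ⟨max M 0, le_max_right _ _, fun z hz =>
      (hMb z hz).trans (le_max_left _ _)⟩
  obtain ⟨K₁, hK₁0, hK₁b⟩ : ∃ K : ℝ, 0 ≤ K ∧ ∀ z ∈ Metric.sphere (0:E) 1, ‖G' z‖ ≤ K := by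
    obtain ⟨K, hKb⟩ := (isCompact_sphere (0:E) 1).exists_bound_of_continuousOn
      ((hGV.continuousOn_fderiv_of_isOpen hVopen (by norm_num)).mono
        (fun z hz => by simpa [hV] using ne_of_mem_sphere hz one_ne_zero))
    exact ⟨max K 0, le_max_right _ _, fun z hz => (hKb z hz).trans (le_max_left _ _)⟩
  obtain ⟨K₂, hK₂0, hK₂b⟩ : ∃ K : ℝ, 0 ≤ K ∧ ∀ z ∈ Metric.sphere (0:E) 1, ‖G'' z‖ ≤ K := by
    obtain ⟨K, hKb⟩ := (isCompact_sphere (0:E) 1).exists_bound_of_continuousOn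
      ((hG'V.continuousOn_fderiv_of_isOpen hVopen (by norm_num)).mono
        (fun z hz => by simpa [hV] using ne_of_mem_sphere hz one_ne_zero))
    exact ⟨max K 0, le_max_right _ _, fun z hz => (hKb z hz).trans (le_max_left _ _)⟩
  -- the global scaled bounds
  have hGbound : ∀ z : E, z ≠ 0 → |G z| ≤ M := by
    intro z hz; exact hMb _ (hNsphere z hz)
  have hG'bound : ∀ z : E, z ≠ 0 → ‖z‖ * ‖G' z‖ ≤ K₁ := by
    intro z hz
    have hzn : (0:ℝ) < ‖z‖ := norm_pos_iff.2 hz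
    have hc : 0 < ‖z‖⁻¹ := inv_pos.2 hzn
    have h1 := hscale1 _ hc z hz
    have h3 : ‖G' z‖ = ‖z‖⁻¹ * ‖G' (N z)‖ := by
      rw [h1, norm_smul (‖z‖⁻¹) (G' (‖z‖⁻¹ • z)), Real.norm_eq_abs, abs_of_pos hc]
    have h4 : ‖G' (N z)‖ ≤ K₁ := hK₁b _ (hNsphere z hz)
    rw [h3]
    have h5 : ‖z‖ * (‖z‖⁻¹ * ‖G' (N z)‖) = ‖G' (N z)‖ := by
      field_simp
    rw [h5]; exact h4
  have hG''bound : ∀ z : E, z ≠ 0 → ‖z‖ ^ 2 * ‖G'' z‖ ≤ K₂ := by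
    intro z hz
    have hzn : (0:ℝ) < ‖z‖ := norm_pos_iff.2 hz
    have hc : 0 < ‖z‖⁻¹ := inv_pos.2 hzn
    have h1 := hscale2 _ hc z hz
    have h4 : ‖G'' (N z)‖ ≤ K₂ := hK₂b _ (hNsphere z hz)
    have h5 : ‖z‖ ^ 2 * (‖z‖⁻¹ * ‖z‖⁻¹ * ‖G'' (N z)‖) = ‖G'' (N z)‖ := by
      field_simp
    calc ‖z‖ ^ 2 * ‖G'' z‖ ≤ ‖z‖ ^ 2 * (‖z‖⁻¹ * ‖z‖⁻¹ * ‖G'' (N z)‖) := by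
          exact mul_le_mul_of_nonneg_left h1 (by positivity)
      _ = ‖G'' (N z)‖ := h5
      _ ≤ K₂ := h4
  set C : ℝ := M + 4 * K₁ + K₂ + 1 with hC
  set H : E → ℝ := fun z => ⟪z, z⟫ * (G z + C) with hH
  have hHlower : ∀ z : E, z ≠ 0 → 1 ≤ G z + C := by
    intro z hz
    have := hGbound z hz
    have h2 := abs_le.1 this
    simp only [hC]
    linarith only [h2.1, hK₁0, hK₂0]
  have hH0 : H 0 = 0 := by simp [hH]
  have hHnonneg : ∀ z : E, 0 ≤ H z := by
    intro z
    rcases eq_or_ne z 0 with rfl | hz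
    · simp [hH0]
    · have h1 := hHlower z hz
      have h2 : (0:ℝ) ≤ ⟪z, z⟫ := real_inner_self_nonneg
      simp only [hH]
      exact mul_nonneg h2 (by linarith only [h1])
  have hHhom : ∀ s : ℝ, 0 ≤ s → ∀ z : E, H (s • z) = s ^ 2 * H z := by
    intro s hs z
    rcases hs.eq_or_lt with rfl | hs
    · simp [hH]
    rcases eq_or_ne z 0 with rfl | hz
    · simp [hH]
    have h1 : G (s • z) = G z := hGhom s hs z hz
    simp only [hH, h1, real_inner_smul_left, real_inner_smul_right]
    ring
  have hHhomneg : ∀ s : ℝ, s < 0 → ∀ z : E, H (s • z) = s ^ 2 * H (-z) := by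
    intro s hs z
    have h1 : s • z = (-s) • (-z) := by rw [neg_smul, smul_neg, neg_neg]
    rw [h1, hHhom (-s) (by linarith) (-z)]
    ring
  -- main convexity inequality
  have hmain : ∀ x y : E, ∀ a b : ℝ, 0 ≤ a → 0 ≤ b → a + b = 1 →
      H (a • x + b • y) ≤ a * H x + b * H y := by
    intro x y a b ha hb hab
    have hb1 : b ≤ 1 := by linarith
    have ha1 : a ≤ 1 := by linarith
    by_cases hseg : ∀ t ∈ Icc (0:ℝ) 1, x + t • (y - x) ≠ 0
    · -- the segment avoids the origin
      set v : E := y - x with hv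
      set γ : ℝ → E := fun t => x + t • v with hγdef
      have hIcc : ∀ t ∈ Icc (0:ℝ) 1, γ t ≠ 0 := fun t ht => hseg t ht
      have hγd : ∀ t : ℝ, HasDerivAt γ v t := by
        intro t
        have h0 : HasDerivAt (fun t : ℝ => t • v) ((1:ℝ) • v) t :=
          (hasDerivAt_id t).smul_const v
        have h0' : HasDerivAt (fun t : ℝ => t • v) v t := by simpa using h0
        exact h0'.const_add x
      have hq : ∀ t : ℝ, HasDerivAt (fun s => (⟪γ s, γ s⟫ : ℝ)) (2 * ⟪γ t, v⟫) t := by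
        intro t
        have h0 := (hγd t).inner ℝ (hγd t)
        simpa [real_inner_comm, two_mul] using h0
      have hip : ∀ t : ℝ, HasDerivAt (fun s => (⟪γ s, v⟫ : ℝ)) (⟪v, v⟫ : ℝ) t := by
        intro t
        have h0 := (hγd t).inner ℝ (hasDerivAt_const t v)
        simpa using h0
      have hGγ : ∀ t : ℝ, γ t ≠ 0 → HasDerivAt (fun s => G (γ s)) ((G' (γ t)) v) t := by
        intro t ht
        have h0 : HasFDerivAt G (G' (γ t)) (γ t) := (hGd _ ht).hasFDerivAt
        exact h0.comp_hasDerivAt t (hγd t)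
      have hG'γ : ∀ t : ℝ, γ t ≠ 0 →
          HasDerivAt (fun s => (G' (γ s)) v) (((G'' (γ t)) v) v) t := by
        intro t ht
        have h0 : HasFDerivAt G' (G'' (γ t)) (γ t) := (hG'd _ ht).hasFDerivAt
        have h1 : HasDerivAt (fun s => G' (γ s)) ((G'' (γ t)) v) t :=
          h0.comp_hasDerivAt t (hγd t)
        have h2 := h1.clm_apply (hasDerivAt_const t v)
        simpa using h2
      set h : ℝ → ℝ := fun t => ⟪γ t, γ t⟫ * (G (γ t) + C) with hhdef
      set h1 : ℝ → ℝ := fun t =>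
        2 * ⟪γ t, v⟫ * (G (γ t) + C) + ⟪γ t, γ t⟫ * ((G' (γ t)) v) with hh1def
      have hhd : ∀ t : ℝ, γ t ≠ 0 → HasDerivAt h (h1 t) t := by
        intro t ht
        have h0 := (hq t).mul ((hGγ t ht).add_const C)
        exact h0
      have hh1d : ∀ t : ℝ, γ t ≠ 0 → HasDerivAt h1
          (2 * ⟪v, v⟫ * (G (γ t) + C) + 2 * ⟪γ t, v⟫ * ((G' (γ t)) v)
            + (2 * ⟪γ t, v⟫ * ((G' (γ t)) v) + ⟪γ t, γ t⟫ * (((G'' (γ t)) v) v))) t := by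
        intro t ht
        have ha1 : HasDerivAt (fun s => 2 * ⟪γ s, v⟫) (2 * ⟪v, v⟫) t := (hip t).const_mul 2
        have ha2 := ha1.mul ((hGγ t ht).add_const C)
        have ha3 := (hq t).mul (hG'γ t ht)
        have ha4 := ha2.add ha3
        exact ha4
      have hpos : ∀ t : ℝ, γ t ≠ 0 →
          0 ≤ 2 * ⟪v, v⟫ * (G (γ t) + C) + 2 * ⟪γ t, v⟫ * ((G' (γ t)) v)
            + (2 * ⟪γ t, v⟫ * ((G' (γ t)) v) + ⟪γ t, γ t⟫ * (((G'' (γ t)) v) v)) := by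
        intro t ht
        set z : E := γ t with hz
        have hA : (0:ℝ) < ‖z‖ := norm_pos_iff.2 ht
        have hBnn : (0:ℝ) ≤ ‖v‖ := norm_nonneg v
        have e1 : (⟪v, v⟫ : ℝ) = ‖v‖ ^ 2 := real_inner_self_eq_norm_sq v
        have e2 : (⟪z, z⟫ : ℝ) = ‖z‖ ^ 2 := real_inner_self_eq_norm_sq z
        have e3 : |(⟪z, v⟫ : ℝ)| ≤ ‖z‖ * ‖v‖ := abs_real_inner_le_norm z v
        have e4 : |(G' z) v| ≤ ‖G' z‖ * ‖v‖ := by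
          simpa [Real.norm_eq_abs] using (G' z).le_opNorm v
        have e5 : |((G'' z) v) v| ≤ ‖G'' z‖ * ‖v‖ * ‖v‖ := by
          have e5a : ‖((G'' z) v) v‖ ≤ ‖(G'' z) v‖ * ‖v‖ := ((G'' z) v).le_opNorm v
          have e5b : ‖(G'' z) v‖ ≤ ‖G'' z‖ * ‖v‖ := (G'' z).le_opNorm v
          have := e5a.trans (mul_le_mul_of_nonneg_right e5b hBnn)
          simpa [Real.norm_eq_abs] using this
        have e6 := hG'bound z ht
        have e7 := hG''bound z ht
        have e8 : 1 + 4 * K₁ + K₂ ≤ G z + C := by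
          have := abs_le.1 (hGbound z ht)
          simp only [hC]
          linarith [this.1]
        have b1 : |(⟪z, v⟫ : ℝ) * ((G' z) v)| ≤ K₁ * ‖v‖ ^ 2 := by
          rw [abs_mul]
          calc |(⟪z, v⟫ : ℝ)| * |(G' z) v| ≤ (‖z‖ * ‖v‖) * (‖G' z‖ * ‖v‖) :=
                mul_le_mul e3 e4 (abs_nonneg _) (by positivity)
            _ = (‖z‖ * ‖G' z‖) * ‖v‖ ^ 2 := by ring
            _ ≤ K₁ * ‖v‖ ^ 2 := mul_le_mul_of_nonneg_right e6 (by positivity)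
        have b2 : |(⟪z, z⟫ : ℝ) * (((G'' z) v) v)| ≤ K₂ * ‖v‖ ^ 2 := by
          rw [abs_mul, e2, abs_of_nonneg (by positivity : (0:ℝ) ≤ ‖z‖ ^ 2)]
          calc ‖z‖ ^ 2 * |((G'' z) v) v| ≤ ‖z‖ ^ 2 * (‖G'' z‖ * ‖v‖ * ‖v‖) :=
                mul_le_mul_of_nonneg_left e5 (by positivity)
            _ = (‖z‖ ^ 2 * ‖G'' z‖) * ‖v‖ ^ 2 := by ring
            _ ≤ K₂ * ‖v‖ ^ 2 := mul_le_mul_of_nonneg_right e7 (by positivity)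
        have d1 : 2 * ‖v‖ ^ 2 * (1 + 4 * K₁ + K₂) ≤ 2 * ‖v‖ ^ 2 * (G z + C) := by
          apply mul_le_mul_of_nonneg_left e8 (by positivity)
        have d2 : -(K₁ * ‖v‖ ^ 2) ≤ (⟪z, v⟫ : ℝ) * ((G' z) v) := (abs_le.1 b1).1
        have d3 : -(K₂ * ‖v‖ ^ 2) ≤ (⟪z, z⟫ : ℝ) * (((G'' z) v) v) := (abs_le.1 b2).1
        have hv2 : (0:ℝ) ≤ ‖v‖ ^ 2 := by positivity
        have hK1v : (0:ℝ) ≤ K₁ * ‖v‖ ^ 2 := mul_nonneg hK₁0 hv2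
        have hK2v : (0:ℝ) ≤ K₂ * ‖v‖ ^ 2 := mul_nonneg hK₂0 hv2
        rw [e1]
        linarith [d1, d2, d3, hv2, hK1v, hK2v]
      have hconth : ContinuousOn h (Icc 0 1) := fun t htI =>
        ((hhd t (hIcc t htI)).continuousAt).continuousWithinAt
      have hdiffh : DifferentiableOn ℝ h (interior (Icc (0:ℝ) 1)) := by
        rw [interior_Icc]
        exact fun t htI =>
          ((hhd t (hIcc t (Ioo_subset_Icc_self htI))).differentiableAt).differentiableWithinAt
      have hconth1 : ContinuousOn h1 (Icc 0 1) := fun t htI =>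
        ((hh1d t (hIcc t htI)).continuousAt).continuousWithinAt
      have hdiffh1 : DifferentiableOn ℝ h1 (interior (Icc (0:ℝ) 1)) := by
        rw [interior_Icc]
        exact fun t htI =>
          ((hh1d t (hIcc t (Ioo_subset_Icc_self htI))).differentiableAt).differentiableWithinAt
      have hmono : MonotoneOn h1 (Icc (0:ℝ) 1) := by
        apply monotoneOn_of_deriv_nonneg (convex_Icc 0 1) hconth1 hdiffh1
        intro t htI
        rw [interior_Icc] at htI
        have ht := hIcc t (Ioo_subset_Icc_self htI)
        rw [(hh1d t ht).deriv]
        exact hpos t ht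
      have hcvx : ConvexOn ℝ (Icc (0:ℝ) 1) h := by
        apply MonotoneOn.convexOn_of_deriv (convex_Icc 0 1) hconth hdiffh
        intro s hs t ht hst
        rw [interior_Icc] at hs ht
        rw [(hhd s (hIcc s (Ioo_subset_Icc_self hs))).deriv,
          (hhd t (hIcc t (Ioo_subset_Icc_self ht))).deriv]
        exact hmono (Ioo_subset_Icc_self hs) (Ioo_subset_Icc_self ht) hst
      have hγ0 : γ 0 = x := by simp [hγdef]
      have hγ1 : γ 1 = y := by simp only [hγdef, one_smul, hv]; abel
      have hgb : γ b = a • x + b • y := by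
        simp only [hγdef, hv]
        have haeq : a = 1 - b := by linarith
        rw [smul_sub, haeq, sub_smul, one_smul]
        abel
      have hfin := hcvx.2 (left_mem_Icc.2 zero_le_one) (right_mem_Icc.2 zero_le_one) ha hb hab
      have hb01 : a • (0:ℝ) + b • (1:ℝ) = b := by simp
      rw [hb01] at hfin
      have hH0x : h 0 = H x := by rw [hhdef, hH]; simp only [hγ0]
      have hH1y : h 1 = H y := by rw [hhdef, hH]; simp only [hγ1]
      have hHb : h b = H (a • x + b • y) := by rw [hhdef, hH]; simp only [hgb]
      rw [hH0x, hH1y, hHb] at hfin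
      simpa using hfin
    · -- the segment hits the origin: x and y are collinear
      push_neg at hseg
      obtain ⟨t₀, ht₀, hγ0⟩ := hseg
      rcases eq_or_ne x 0 with rfl | hx0
      · have hby : a • (0:E) + b • y = b • y := by simp
        rw [hby, hHhom b hb y, hH0]
        have hP : 0 ≤ (b - b ^ 2) * H y :=
          mul_nonneg (by nlinarith only [hb, hb1]) (hHnonneg y)
        linarith only [hP]
      · have ht₀0 : t₀ ≠ 0 := by
          rintro rfl
          simp only [zero_smul, add_zero] at hγ0
          exact hx0 hγ0
        have ht₀pos : 0 < t₀ := lt_of_le_of_ne ht₀.1 (Ne.symm ht₀0)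
        have hcy : y = (1 - t₀⁻¹) • x := by
          have h2 : t₀ • (y - x) = -x := by
            have : x + t₀ • (y - x) = 0 := hγ0
            linear_combination (norm := module) this
          have h3 : y - x = -(t₀⁻¹ • x) := by
            calc y - x = t₀⁻¹ • (t₀ • (y - x)) := by
                  rw [smul_smul, inv_mul_cancel₀ ht₀0, one_smul]
              _ = t₀⁻¹ • (-x) := by rw [h2]
              _ = -(t₀⁻¹ • x) := smul_neg _ _
          calc y = (y - x) + x := by abel
            _ = -(t₀⁻¹ • x) + x := by rw [h3]
            _ = (1 - t₀⁻¹) • x := by rw [sub_smul, one_smul]; abel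
        set c : ℝ := 1 - t₀⁻¹ with hcdef
        have hcle : c ≤ 0 := by
          have h4 : 1 ≤ t₀⁻¹ := (one_le_inv_iff₀.2 ⟨ht₀pos, ht₀.2⟩)
          simp only [hcdef]
          linarith
        have hcomb : a • x + b • y = (a + b * c) • x := by
          rw [hcy, smul_smul, ← add_smul]
        rcases hcle.lt_or_eq with hcneg | hc0
        · set lam : ℝ := a + b * c with hlamdef
          have h6 : H y = c ^ 2 * H (-x) := by rw [hcy]; exact hHhomneg c hcneg x
          rcases le_or_gt 0 lam with hlam | hlam
          · have h5 : H (a • x + b • y) = lam ^ 2 * H x := by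
              rw [hcomb, hHhom lam hlam]
            rw [h5, h6]
            have hbc : b * c ≤ 0 := mul_nonpos_of_nonneg_of_nonpos hb hcneg.le
            have hlam_le : lam ≤ a := by rw [hlamdef]; linarith only [hbc]
            have hx1 := hHnonneg x
            have hx2 := hHnonneg (-x)
            have hkey : lam ^ 2 ≤ a := by nlinarith only [hlam, hlam_le, ha1, ha]
            have hQ1 : lam ^ 2 * H x ≤ a * H x := mul_le_mul_of_nonneg_right hkey hx1
            have hQ2 : 0 ≤ b * c ^ 2 * H (-x) :=
              mul_nonneg (mul_nonneg hb (sq_nonneg c)) hx2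
            linarith only [hQ1, hQ2]
          · have h5 : H (a • x + b • y) = lam ^ 2 * H (-x) := by
              rw [hcomb]; exact hHhomneg lam hlam x
            rw [h5, h6]
            have hx1 := hHnonneg x
            have hx2 := hHnonneg (-x)
            have hbc : b * c ≤ lam := by rw [hlamdef]; linarith only [ha]
            have hk1 : lam ^ 2 ≤ (b * c) ^ 2 := by
              nlinarith only [hbc, hlam, mul_nonneg
                (show (0:ℝ) ≤ lam - b * c by linarith only [hbc])
                (show (0:ℝ) ≤ -(b * c) - lam by linarith only [hbc, hlam])]
            have hk2 : (b * c) ^ 2 ≤ b * c ^ 2 := by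
              have := mul_nonneg (sq_nonneg c) (show (0:ℝ) ≤ b - b ^ 2 by
                nlinarith only [hb, hb1])
              nlinarith only [this]
            have hkey : lam ^ 2 ≤ b * c ^ 2 := hk1.trans hk2
            have hQ1 : lam ^ 2 * H (-x) ≤ b * c ^ 2 * H (-x) :=
              mul_le_mul_of_nonneg_right hkey hx2
            have hQ2 : 0 ≤ a * H x := mul_nonneg ha hx1
            linarith only [hQ1, hQ2]
        · have hy0 : y = 0 := by rw [hcy, hc0, zero_smul]
          rw [hcomb, hc0, mul_zero, add_zero, hHhom a ha x, hy0, hH0]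
          have hP : 0 ≤ (a - a ^ 2) * H x :=
            mul_nonneg (by nlinarith only [ha, ha1]) (hHnonneg x)
          linarith only [hP]
  refine ⟨fun z => H z + (-C), ?_, ?_⟩
  · refine ConvexOn.add ⟨convex_univ, ?_⟩ (convexOn_const _ convex_univ)
    intro x _ y _ a b ha hb hab
    simpa using hmain x y a b ha hb hab
  · intro x hx
    have hx1 : ‖x‖ = 1 := by simpa [mem_sphere_iff_norm] using hx
    have : G x = f x := by
      simp only [hG, hN]
      rw [hx1]; norm_num
    have h2 : ⟪x, x⟫ = (1:ℝ) := by
      rw [real_inner_self_eq_norm_sq, hx1]; norm_num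
    simp only [hH, this, h2]; ring

end Aux

/-- A C² function on the unit sphere Sⁿ ⊂ ℝ^{n+1} admits a convex
extension F : ℝ^{n+1} → ℝ.  Twice continuous differentiability of `f` on the
sphere is formalized as: `f` is the restriction of a function that is C² on a
neighborhood of the sphere. -/
theorem convex_extension_of_sphere_C2 (n : ℕ)
    (f : EuclideanSpace ℝ (Fin (n + 1)) → ℝ)
    (U : Set (EuclideanSpace ℝ (Fin (n + 1))))
    (hU : IsOpen U) (hUs : Metric.sphere (0 : EuclideanSpace ℝ (Fin (n + 1))) 1 ⊆ U)
    (hf : ContDiffOn ℝ 2 f U) :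
    ∃ F : EuclideanSpace ℝ (Fin (n + 1)) → ℝ,
      ConvexOn ℝ Set.univ F ∧
      ∀ x ∈ Metric.sphere (0 : EuclideanSpace ℝ (Fin (n + 1))) 1, F x = f x := by
  exact aux_convex_ext f U hU hUs hf
end

section
/- Let 𝓔 be the 6-dimensional space of symmetric 3×3 real matrices with inner product ⟨A,B⟩ = tr(AB), and let K be the group of 3×3 signed permutation matrices acting on 𝓔 by A ↦ kᵀ A k. Then the space of symmetric bilinear forms H : 𝓔 × 𝓔 → ℝ satisfying H(kᵀÂk, kᵀεk) = H(Â, ε) for all k ∈ K is three-dimensional, spanned by H₁(Â,ε) = ⟨P_g Â, P_g ε⟩, H₂(Â,ε) = ⟨P_{D₀} Â, P_{D₀} ε⟩, H₃(Â,ε) = ⟨P_{D⊥} Â, P_{D⊥} ε⟩, where P_g, P_{D₀}, P_{D⊥} are the orthogonal projections onto the span of the identity, the traceless diagonal matrices, and the off-diagonal symmetric matrices, respectively. -/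
open Matrix

/-- A 3×3 signed permutation matrix. -/
def IsSignedPerm (k : Matrix (Fin 3) (Fin 3) ℝ) : Prop :=
  ∃ (σ : Equiv.Perm (Fin 3)) (s : Fin 3 → ℝ),
    (∀ j, s j = 1 ∨ s j = -1) ∧ k = Matrix.of fun i j => if i = σ j then s j else 0

/-- Orthogonal projection of a 3×3 matrix onto the span of the identity. -/
noncomputable def Pg (A : Matrix (Fin 3) (Fin 3) ℝ) : Matrix (Fin 3) (Fin 3) ℝ :=
  (A.trace / 3) • (1 : Matrix (Fin 3) (Fin 3) ℝ)

/-- Orthogonal projection onto the traceless diagonal matrices. -/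
noncomputable def PD0 (A : Matrix (Fin 3) (Fin 3) ℝ) : Matrix (Fin 3) (Fin 3) ℝ :=
  Matrix.diagonal (fun i => A i i) - (A.trace / 3) • (1 : Matrix (Fin 3) (Fin 3) ℝ)

/-- Orthogonal projection onto the symmetric matrices with zero diagonal. -/
noncomputable def PDperp (A : Matrix (Fin 3) (Fin 3) ℝ) : Matrix (Fin 3) (Fin 3) ℝ :=
  A - Matrix.diagonal (fun i => A i i)

/-- `H₁(Â,ε) = ⟨P_g Â, P_g ε⟩` with `⟨A,B⟩ = tr(AB)`. -/
noncomputable def H₁ (A B : Matrix (Fin 3) (Fin 3) ℝ) : ℝ := (Pg A * Pg B).trace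

/-- `H₂(Â,ε) = ⟨P_{D₀} Â, P_{D₀} ε⟩`. -/
noncomputable def H₂ (A B : Matrix (Fin 3) (Fin 3) ℝ) : ℝ := (PD0 A * PD0 B).trace

/-- `H₃(Â,ε) = ⟨P_{D⊥} Â, P_{D⊥} ε⟩`. -/
noncomputable def H₃ (A B : Matrix (Fin 3) (Fin 3) ℝ) : ℝ := (PDperp A * PDperp B).trace

section Aux
open Matrix

lemma conj_entry (σ : Equiv.Perm (Fin 3)) (s : Fin 3 → ℝ) (A : Matrix (Fin 3) (Fin 3) ℝ) (j j' : Fin 3) :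
    ((Matrix.of fun i j => if i = σ j then s j else 0)ᵀ * A *
      (Matrix.of fun i j => if i = σ j then s j else 0)) j j' = s j * s j' * A (σ j) (σ j') := by
  simp [mul_apply, Finset.mul_sum, Finset.sum_mul, ite_mul, mul_ite]
  ring

lemma sp_mul (σ : Equiv.Perm (Fin 3)) (s : Fin 3 → ℝ) (hs : ∀ j, s j = 1 ∨ s j = -1) :
    (Matrix.of fun i j => if i = σ j then s j else 0 : Matrix (Fin 3) (Fin 3) ℝ)ᵀ *
      (Matrix.of fun i j => if i = σ j then s j else 0) = 1 := by
  ext j j'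
  simp [mul_apply, ite_mul, mul_ite, Matrix.one_apply]
  rcases eq_or_ne j j' with h | h
  · subst h; simp; rcases hs j with h | h <;> simp [h]
  · simp [h]
    intro h'
    exact absurd h'.symm h

lemma H1_eq (A B : Matrix (Fin 3) (Fin 3) ℝ) : H₁ A B = A.trace * B.trace / 3 := by
  simp [H₁, Pg, smul_mul_assoc, mul_smul_comm, trace_smul, smul_smul, trace_one]
  ring

lemma H2_eq (A B : Matrix (Fin 3) (Fin 3) ℝ) :
    H₂ A B = (∑ i, A i i * B i i) - A.trace * B.trace / 3 := by
  simp [H₂, PD0, trace, mul_apply, Fin.sum_univ_three, diagonal, Matrix.one_apply]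
  ring

lemma H3_eq (A B : Matrix (Fin 3) (Fin 3) ℝ) :
    H₃ A B = (A * B).trace - ∑ i, A i i * B i i := by
  simp [H₃, PDperp, trace, mul_apply, Fin.sum_univ_three, diagonal, Matrix.one_apply]
  ring

lemma trace_conj {k : Matrix (Fin 3) (Fin 3) ℝ} (hk : IsSignedPerm k)
    (A : Matrix (Fin 3) (Fin 3) ℝ) : (kᵀ * A * k).trace = A.trace := by
  obtain ⟨σ, s, hs, rfl⟩ := hk
  have h : ∀ j, s j * s j = 1 := fun j => by rcases hs j with h | h <;> rw [h] <;> norm_num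
  simp only [Matrix.trace, Matrix.diag, conj_entry]
  calc ∑ j, s j * s j * A (σ j) (σ j) = ∑ j, A (σ j) (σ j) := by
        refine Finset.sum_congr rfl fun j _ => by rw [h j, one_mul]
    _ = ∑ j, A j j := Equiv.sum_comp σ fun j => A j j

lemma diagsum_conj {k : Matrix (Fin 3) (Fin 3) ℝ} (hk : IsSignedPerm k)
    (A B : Matrix (Fin 3) (Fin 3) ℝ) :
    ∑ i, (kᵀ * A * k) i i * (kᵀ * B * k) i i = ∑ i, A i i * B i i := by
  obtain ⟨σ, s, hs, rfl⟩ := hk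
  have h : ∀ j, s j * s j = 1 := fun j => by rcases hs j with h | h <;> rw [h] <;> norm_num
  simp only [conj_entry]
  calc ∑ j, (s j * s j * A (σ j) (σ j)) * (s j * s j * B (σ j) (σ j))
      = ∑ j, A (σ j) (σ j) * B (σ j) (σ j) := by
        refine Finset.sum_congr rfl fun j _ => by rw [h j]; ring
    _ = ∑ j, A j j * B j j := Equiv.sum_comp σ fun j => A j j * B j j

lemma mul_trace_conj {k : Matrix (Fin 3) (Fin 3) ℝ} (hk : IsSignedPerm k)
    (A B : Matrix (Fin 3) (Fin 3) ℝ) :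
    ((kᵀ * A * k) * (kᵀ * B * k)).trace = (A * B).trace := by
  have hkk : kᵀ * k = 1 := by obtain ⟨σ, s, hs, rfl⟩ := hk; exact sp_mul σ s hs
  have hkkT : k * kᵀ = 1 := mul_eq_one_comm.mp hkk
  have h1 : (kᵀ * A * k) * (kᵀ * B * k) = kᵀ * (A * B * k) := by
    calc (kᵀ * A * k) * (kᵀ * B * k) = kᵀ * (A * ((k * kᵀ) * (B * k))) := by
          simp only [Matrix.mul_assoc]
      _ = kᵀ * (A * B * k) := by rw [hkkT, Matrix.one_mul, Matrix.mul_assoc]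
  rw [h1, Matrix.trace_mul_comm, Matrix.mul_assoc, hkkT, Matrix.mul_one]

end Aux

section Aux2
open Matrix

noncomputable def bD0 : Matrix (Fin 3) (Fin 3) ℝ := !![1,0,0;0,0,0;0,0,0]
noncomputable def bD1 : Matrix (Fin 3) (Fin 3) ℝ := !![0,0,0;0,1,0;0,0,0]
noncomputable def bD2 : Matrix (Fin 3) (Fin 3) ℝ := !![0,0,0;0,0,0;0,0,1]
noncomputable def bS01 : Matrix (Fin 3) (Fin 3) ℝ := !![0,1,0;1,0,0;0,0,0]
noncomputable def bS02 : Matrix (Fin 3) (Fin 3) ℝ := !![0,0,1;0,0,0;1,0,0]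
noncomputable def bS12 : Matrix (Fin 3) (Fin 3) ℝ := !![0,0,0;0,0,1;0,1,0]
noncomputable def kP01 : Matrix (Fin 3) (Fin 3) ℝ := !![0,1,0;1,0,0;0,0,1]
noncomputable def kP12 : Matrix (Fin 3) (Fin 3) ℝ := !![1,0,0;0,0,1;0,1,0]
noncomputable def kF0 : Matrix (Fin 3) (Fin 3) ℝ := !![-1,0,0;0,1,0;0,0,1]
noncomputable def kF1 : Matrix (Fin 3) (Fin 3) ℝ := !![1,0,0;0,-1,0;0,0,1]

lemma kP01_sp : IsSignedPerm kP01 := by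
  refine ⟨Equiv.swap 0 1, fun _ => 1, fun _ => Or.inl rfl, ?_⟩
  ext i j; fin_cases i <;> fin_cases j <;> norm_num [kP01, Equiv.swap_apply_def]

lemma kP12_sp : IsSignedPerm kP12 := by
  refine ⟨Equiv.swap 1 2, fun _ => 1, fun _ => Or.inl rfl, ?_⟩
  ext i j; fin_cases i <;> fin_cases j <;> norm_num [kP12, Equiv.swap_apply_def, Fin.ext_iff]

lemma kF0_sp : IsSignedPerm kF0 := by
  refine ⟨Equiv.refl _, ![-1,1,1], ?_, ?_⟩
  · intro j; fin_cases j <;> norm_num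
  · ext i j; fin_cases i <;> fin_cases j <;> norm_num [kF0, Fin.ext_iff]

lemma kF1_sp : IsSignedPerm kF1 := by
  refine ⟨Equiv.refl _, ![1,-1,1], ?_, ?_⟩
  · intro j; fin_cases j <;> norm_num
  · ext i j; fin_cases i <;> fin_cases j <;> norm_num [kF1, Fin.ext_iff]

lemma bD0_symm : bD0.IsSymm := by
  ext i j; fin_cases i <;> fin_cases j <;> simp [bD0, Matrix.IsSymm, Matrix.vecHead, Matrix.vecTail]
lemma bD1_symm : bD1.IsSymm := by
  ext i j; fin_cases i <;> fin_cases j <;> simp [bD1, Matrix.IsSymm, Matrix.vecHead, Matrix.vecTail]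
lemma bD2_symm : bD2.IsSymm := by
  ext i j; fin_cases i <;> fin_cases j <;> simp [bD2, Matrix.IsSymm, Matrix.vecHead, Matrix.vecTail]
lemma bS01_symm : bS01.IsSymm := by
  ext i j; fin_cases i <;> fin_cases j <;> simp [bS01, Matrix.IsSymm, Matrix.vecHead, Matrix.vecTail]
lemma bS02_symm : bS02.IsSymm := by
  ext i j; fin_cases i <;> fin_cases j <;> simp [bS02, Matrix.IsSymm, Matrix.vecHead, Matrix.vecTail]
lemma bS12_symm : bS12.IsSymm := by
  ext i j; fin_cases i <;> fin_cases j <;> simp [bS12, Matrix.IsSymm, Matrix.vecHead, Matrix.vecTail]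

lemma cP01_D0 : kP01ᵀ * bD0 * kP01 = bD1 := by
  ext i j; fin_cases i <;> fin_cases j <;> simp [kP01, bD0, bD1, mul_apply, Matrix.transpose_apply, Fin.sum_univ_three]
lemma cP01_D2 : kP01ᵀ * bD2 * kP01 = bD2 := by
  ext i j; fin_cases i <;> fin_cases j <;> simp [kP01, bD2, mul_apply, Matrix.transpose_apply, Fin.sum_univ_three]
lemma cP01_S02 : kP01ᵀ * bS02 * kP01 = bS12 := by
  ext i j; fin_cases i <;> fin_cases j <;> simp [kP01, bS02, bS12, mul_apply, Matrix.transpose_apply, Fin.sum_univ_three]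
lemma cP12_D0 : kP12ᵀ * bD0 * kP12 = bD0 := by
  ext i j; fin_cases i <;> fin_cases j <;> simp [kP12, bD0, mul_apply, Matrix.transpose_apply, Fin.sum_univ_three]
lemma cP12_D1 : kP12ᵀ * bD1 * kP12 = bD2 := by
  ext i j; fin_cases i <;> fin_cases j <;> simp [kP12, bD1, bD2, mul_apply, Matrix.transpose_apply, Fin.sum_univ_three]
lemma cP12_S01 : kP12ᵀ * bS01 * kP12 = bS02 := by
  ext i j; fin_cases i <;> fin_cases j <;> simp [kP12, bS01, bS02, mul_apply, Matrix.transpose_apply, Fin.sum_univ_three]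
lemma cF0_D0 : kF0ᵀ * bD0 * kF0 = bD0 := by
  ext i j; fin_cases i <;> fin_cases j <;> simp [kF0, bD0, mul_apply, Matrix.transpose_apply, Fin.sum_univ_three]
lemma cF0_D1 : kF0ᵀ * bD1 * kF0 = bD1 := by
  ext i j; fin_cases i <;> fin_cases j <;> simp [kF0, bD1, mul_apply, Matrix.transpose_apply, Fin.sum_univ_three]
lemma cF0_D2 : kF0ᵀ * bD2 * kF0 = bD2 := by
  ext i j; fin_cases i <;> fin_cases j <;> simp [kF0, bD2, mul_apply, Matrix.transpose_apply, Fin.sum_univ_three]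
lemma cF0_S01 : kF0ᵀ * bS01 * kF0 = (-1 : ℝ) • bS01 := by
  ext i j; fin_cases i <;> fin_cases j <;> simp [kF0, bS01, mul_apply, Matrix.transpose_apply, Fin.sum_univ_three]
lemma cF0_S02 : kF0ᵀ * bS02 * kF0 = (-1 : ℝ) • bS02 := by
  ext i j; fin_cases i <;> fin_cases j <;> simp [kF0, bS02, mul_apply, Matrix.transpose_apply, Fin.sum_univ_three]
lemma cF0_S12 : kF0ᵀ * bS12 * kF0 = bS12 := by
  ext i j; fin_cases i <;> fin_cases j <;> simp [kF0, bS12, mul_apply, Matrix.transpose_apply, Fin.sum_univ_three]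
lemma cF1_D0 : kF1ᵀ * bD0 * kF1 = bD0 := by
  ext i j; fin_cases i <;> fin_cases j <;> simp [kF1, bD0, mul_apply, Matrix.transpose_apply, Fin.sum_univ_three]
lemma cF1_D1 : kF1ᵀ * bD1 * kF1 = bD1 := by
  ext i j; fin_cases i <;> fin_cases j <;> simp [kF1, bD1, mul_apply, Matrix.transpose_apply, Fin.sum_univ_three]
lemma cF1_D2 : kF1ᵀ * bD2 * kF1 = bD2 := by
  ext i j; fin_cases i <;> fin_cases j <;> simp [kF1, bD2, mul_apply, Matrix.transpose_apply, Fin.sum_univ_three]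
lemma cF1_S01 : kF1ᵀ * bS01 * kF1 = (-1 : ℝ) • bS01 := by
  ext i j; fin_cases i <;> fin_cases j <;> simp [kF1, bS01, mul_apply, Matrix.transpose_apply, Fin.sum_univ_three]
lemma cF1_S02 : kF1ᵀ * bS02 * kF1 = bS02 := by
  ext i j; fin_cases i <;> fin_cases j <;> simp [kF1, bS02, mul_apply, Matrix.transpose_apply, Fin.sum_univ_three]
lemma cF1_S12 : kF1ᵀ * bS12 * kF1 = (-1 : ℝ) • bS12 := by
  ext i j; fin_cases i <;> fin_cases j <;> simp [kF1, bS12, mul_apply, Matrix.transpose_apply, Fin.sum_univ_three]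

lemma decompSym (A : Matrix (Fin 3) (Fin 3) ℝ) (hA : A.IsSymm) :
    A = A 0 0 • bD0 + A 1 1 • bD1 + A 2 2 • bD2 + A 0 1 • bS01 + A 0 2 • bS02 + A 1 2 • bS12 := by
  ext i j
  fin_cases i <;> fin_cases j <;>
    simp [bD0, bD1, bD2, bS01, bS02, bS12, Matrix.vecHead, Matrix.vecTail] <;>
    first
      | rfl
      | exact hA.apply _ _

end Aux2

/-- the space of `K`-invariant symmetric bilinear forms on the
6-dimensional space `𝓔` of symmetric 3×3 matrices is 3-dimensional, spanned by
`H₁, H₂, H₃`: each `Hᵢ` is `K`-invariant, they are linearly independent (as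
forms on `𝓔`), and every `K`-invariant symmetric bilinear form on `𝓔` is a
linear combination of them. -/
theorem invariant_bilinear_forms_on_E :
    -- each `Hᵢ` is symmetric and `K`-invariant on `𝓔`
    (∀ H ∈ [H₁, H₂, H₃], ∀ k, IsSignedPerm k →
      ∀ A B : Matrix (Fin 3) (Fin 3) ℝ, A.IsSymm → B.IsSymm →
        H (kᵀ * A * k) (kᵀ * B * k) = H A B ∧ H A B = H B A) ∧
    -- linear independence of `H₁, H₂, H₃` as forms on `𝓔`
    (∀ c₁ c₂ c₃ : ℝ,
      (∀ A B : Matrix (Fin 3) (Fin 3) ℝ, A.IsSymm → B.IsSymm →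
        c₁ * H₁ A B + c₂ * H₂ A B + c₃ * H₃ A B = 0) →
      c₁ = 0 ∧ c₂ = 0 ∧ c₃ = 0) ∧
    -- every invariant symmetric bilinear form on `𝓔` is a combination
    (∀ H : Matrix (Fin 3) (Fin 3) ℝ → Matrix (Fin 3) (Fin 3) ℝ → ℝ,
      (∀ A B C : Matrix (Fin 3) (Fin 3) ℝ, H (A + B) C = H A C + H B C) →
      (∀ (t : ℝ) (A B : Matrix (Fin 3) (Fin 3) ℝ), H (t • A) B = t * H A B) →
      (∀ A B : Matrix (Fin 3) (Fin 3) ℝ, H A B = H B A) →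
      (∀ k, IsSignedPerm k →
        ∀ A B : Matrix (Fin 3) (Fin 3) ℝ, A.IsSymm → B.IsSymm →
          H (kᵀ * A * k) (kᵀ * B * k) = H A B) →
      ∃ c₁ c₂ c₃ : ℝ, ∀ A B : Matrix (Fin 3) (Fin 3) ℝ, A.IsSymm → B.IsSymm →
        H A B = c₁ * H₁ A B + c₂ * H₂ A B + c₃ * H₃ A B) := by
  
  refine ⟨?_, ?_, ?_⟩
  · intro H hH k hk A B hA hB
    simp only [List.mem_cons, List.not_mem_nil, or_false] at hH
    rcases hH with rfl | rfl | rfl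
    · exact ⟨by rw [H1_eq, H1_eq, trace_conj hk, trace_conj hk],
        by rw [H1_eq, H1_eq]; ring⟩
    · refine ⟨by rw [H2_eq, H2_eq, trace_conj hk, trace_conj hk, diagsum_conj hk], ?_⟩
      rw [H2_eq, H2_eq]; simp only [Fin.sum_univ_three]; ring
    · refine ⟨by rw [H3_eq, H3_eq, mul_trace_conj hk, diagsum_conj hk], ?_⟩
      rw [H3_eq, H3_eq, Matrix.trace_mul_comm]; simp only [Fin.sum_univ_three]; ring
  · intro c₁ c₂ c₃ hlin
    have h1 := hlin 1 1 Matrix.isSymm_one Matrix.isSymm_one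
    have h2 := hlin bD0 bD0 bD0_symm bD0_symm
    have h3 := hlin bS01 bS01 bS01_symm bS01_symm
    rw [H1_eq, H2_eq, H3_eq] at h1 h2 h3
    simp [Matrix.trace, Matrix.diag, Fin.sum_univ_three, mul_apply, Matrix.one_apply,
      bD0, bS01, Matrix.vecHead, Matrix.vecTail] at h1 h2 h3
    refine ⟨by linarith, by linarith, by linarith⟩
  · intro H hadd hsmul hsymm hinv
    have hadd2 : ∀ A B C : Matrix (Fin 3) (Fin 3) ℝ, H A (B + C) = H A B + H A C := by
      intro A B C; rw [hsymm, hadd, hsymm B A, hsymm C A]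
    have hsmul2 : ∀ (t : ℝ) (A B : Matrix (Fin 3) (Fin 3) ℝ), H A (t • B) = t * H A B := by
      intro t A B; rw [hsymm, hsmul, hsymm B A]
    have hz : ∀ k, IsSignedPerm k → ∀ A B : Matrix (Fin 3) (Fin 3) ℝ, A.IsSymm → B.IsSymm →
        kᵀ * A * k = A → kᵀ * B * k = (-1 : ℝ) • B → H A B = 0 := by
      intro k hk A B hA hB e1 e2
      have h := hinv k hk A B hA hB
      rw [e1, e2, hsmul2] at h
      linarith
    have heq : ∀ k, IsSignedPerm k → ∀ A B A' B' : Matrix (Fin 3) (Fin 3) ℝ, A.IsSymm → B.IsSymm →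
        kᵀ * A * k = A' → kᵀ * B * k = B' → H A' B' = H A B := by
      intro k hk A B A' B' hA hB e1 e2
      rw [← e1, ← e2]; exact hinv k hk A B hA hB
    have vD11 : H bD1 bD1 = H bD0 bD0 :=
      heq kP01 kP01_sp bD0 bD0 bD1 bD1 bD0_symm bD0_symm cP01_D0 cP01_D0
    have vD22 : H bD2 bD2 = H bD0 bD0 :=
      (heq kP12 kP12_sp bD1 bD1 bD2 bD2 bD1_symm bD1_symm cP12_D1 cP12_D1).trans vD11
    have vD02 : H bD0 bD2 = H bD0 bD1 :=
      heq kP12 kP12_sp bD0 bD1 bD0 bD2 bD0_symm bD1_symm cP12_D0 cP12_D1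
    have vD10 : H bD1 bD0 = H bD0 bD1 := hsymm _ _
    have vD20 : H bD2 bD0 = H bD0 bD1 := (hsymm _ _).trans vD02
    have vD12 : H bD1 bD2 = H bD0 bD1 :=
      (heq kP01 kP01_sp bD0 bD2 bD1 bD2 bD0_symm bD2_symm cP01_D0 cP01_D2).trans vD02
    have vD21 : H bD2 bD1 = H bD0 bD1 := (hsymm _ _).trans vD12
    have vS02 : H bS02 bS02 = H bS01 bS01 :=
      heq kP12 kP12_sp bS01 bS01 bS02 bS02 bS01_symm bS01_symm cP12_S01 cP12_S01
    have vS12 : H bS12 bS12 = H bS01 bS01 :=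
      (heq kP01 kP01_sp bS02 bS02 bS12 bS12 bS02_symm bS02_symm cP01_S02 cP01_S02).trans vS02
    have z1 : H bD0 bS01 = 0 := hz kF0 kF0_sp bD0 bS01 bD0_symm bS01_symm cF0_D0 cF0_S01
    have z2 : H bD1 bS01 = 0 := hz kF0 kF0_sp bD1 bS01 bD1_symm bS01_symm cF0_D1 cF0_S01
    have z3 : H bD2 bS01 = 0 := hz kF0 kF0_sp bD2 bS01 bD2_symm bS01_symm cF0_D2 cF0_S01
    have z4 : H bD0 bS02 = 0 := hz kF0 kF0_sp bD0 bS02 bD0_symm bS02_symm cF0_D0 cF0_S02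
    have z5 : H bD1 bS02 = 0 := hz kF0 kF0_sp bD1 bS02 bD1_symm bS02_symm cF0_D1 cF0_S02
    have z6 : H bD2 bS02 = 0 := hz kF0 kF0_sp bD2 bS02 bD2_symm bS02_symm cF0_D2 cF0_S02
    have z7 : H bD0 bS12 = 0 := hz kF1 kF1_sp bD0 bS12 bD0_symm bS12_symm cF1_D0 cF1_S12
    have z8 : H bD1 bS12 = 0 := hz kF1 kF1_sp bD1 bS12 bD1_symm bS12_symm cF1_D1 cF1_S12
    have z9 : H bD2 bS12 = 0 := hz kF1 kF1_sp bD2 bS12 bD2_symm bS12_symm cF1_D2 cF1_S12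
    have z10 : H bS02 bS01 = 0 := hz kF1 kF1_sp bS02 bS01 bS02_symm bS01_symm cF1_S02 cF1_S01
    have z11 : H bS12 bS01 = 0 := hz kF0 kF0_sp bS12 bS01 bS12_symm bS01_symm cF0_S12 cF0_S01
    have z12 : H bS12 bS02 = 0 := hz kF0 kF0_sp bS12 bS02 bS12_symm bS02_symm cF0_S12 cF0_S02
    have z1' : H bS01 bD0 = 0 := (hsymm _ _).trans z1
    have z2' : H bS01 bD1 = 0 := (hsymm _ _).trans z2
    have z3' : H bS01 bD2 = 0 := (hsymm _ _).trans z3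
    have z4' : H bS02 bD0 = 0 := (hsymm _ _).trans z4
    have z5' : H bS02 bD1 = 0 := (hsymm _ _).trans z5
    have z6' : H bS02 bD2 = 0 := (hsymm _ _).trans z6
    have z7' : H bS12 bD0 = 0 := (hsymm _ _).trans z7
    have z8' : H bS12 bD1 = 0 := (hsymm _ _).trans z8
    have z9' : H bS12 bD2 = 0 := (hsymm _ _).trans z9
    have z10' : H bS01 bS02 = 0 := (hsymm _ _).trans z10
    have z11' : H bS01 bS12 = 0 := (hsymm _ _).trans z11
    have z12' : H bS02 bS12 = 0 := (hsymm _ _).trans z12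
    refine ⟨H bD0 bD0 + 2 * H bD0 bD1, H bD0 bD0 - H bD0 bD1, H bS01 bS01 / 2, ?_⟩
    intro A B hA hB
    have key : H A B =
        (A 0 0 * B 0 0 + A 1 1 * B 1 1 + A 2 2 * B 2 2) * H bD0 bD0 +
        (A 0 0 * B 1 1 + A 0 0 * B 2 2 + A 1 1 * B 0 0 + A 1 1 * B 2 2 +
          A 2 2 * B 0 0 + A 2 2 * B 1 1) * H bD0 bD1 +
        (A 0 1 * B 0 1 + A 0 2 * B 0 2 + A 1 2 * B 1 2) * H bS01 bS01 := by
      conv_lhs => rw [decompSym A hA, decompSym B hB]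
      simp only [hadd, hadd2, hsmul, hsmul2, vD11, vD22, vD02, vD10, vD20, vD12, vD21,
        vS02, vS12, z1, z2, z3, z4, z5, z6, z7, z8, z9, z10, z11, z12,
        z1', z2', z3', z4', z5', z6', z7', z8', z9', z10', z11', z12']
      ring
    rw [key, H1_eq, H2_eq, H3_eq]
    simp only [Matrix.trace, Matrix.diag, Fin.sum_univ_three, mul_apply]
    rw [show A 1 0 = A 0 1 from hA.apply 0 1, show A 2 0 = A 0 2 from hA.apply 0 2,
      show A 2 1 = A 1 2 from hA.apply 1 2, show B 1 0 = B 0 1 from hB.apply 0 1,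
      show B 2 0 = B 0 2 from hB.apply 0 2, show B 2 1 = B 1 2 from hB.apply 1 2]
    ring
end
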